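/- (Stability of linear SSP Runge-Kutta methods with first-order TASE.) For every real α ≥ 1/2, every integer s with 1 ≤ s ≤ 4, and every complex z with Re z ≤ 0, setting w = z/(1 - αz), the RK stability polynomial satisfies |Σ_{k=0}^{s} w^k / k!| ≤ 1. -/

import Mathlib

/-- Bounding a convex combination of powers of a point in the unit disk. -/
lemma coef_bound (u : ℂ) (hu : ‖u‖ ≤ 1) (a b c d e : ℝ)
    (ha : 0 ≤ a) (hb : 0 ≤ b) (hc : 0 ≤ c) (hd : 0 ≤ d) (he : 0 ≤ e)
    (hsum : a + b + c + d + e = 1) :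
    ‖(a : ℂ) + (b : ℂ) * u + (c : ℂ) * u ^ 2 + (d : ℂ) * u ^ 3
      + (e : ℂ) * u ^ 4‖ ≤ 1 := by
  have h0 : (0:ℝ) ≤ ‖u‖ := norm_nonneg u
  have h1 : ‖(a : ℂ) + (b : ℂ) * u + (c : ℂ) * u ^ 2 + (d : ℂ) * u ^ 3
      + (e : ℂ) * u ^ 4‖ ≤ a + b * ‖u‖ + c * (‖u‖) ^ 2
      + d * (‖u‖) ^ 3 + e * (‖u‖) ^ 4 := by
    refine (norm_add_le _ _).trans ?_
    refine add_le_add ((norm_add_le _ _).trans ?_) (le_of_eq ?_)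
    · refine add_le_add ((norm_add_le _ _).trans ?_) (le_of_eq ?_)
      · refine add_le_add ((norm_add_le _ _).trans ?_) (le_of_eq ?_)
        · refine add_le_add (le_of_eq ?_) (le_of_eq ?_)
          · simp [Complex.norm_real, abs_of_nonneg ha]
          · simp [norm_mul, norm_pow, Complex.norm_real, abs_of_nonneg hb]
        · simp [norm_mul, norm_pow, Complex.norm_real, abs_of_nonneg hc]
      · simp [norm_mul, norm_pow, Complex.norm_real, abs_of_nonneg hd]
    · simp [norm_mul, norm_pow, Complex.norm_real, abs_of_nonneg he]
  refine h1.trans ?_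
  nlinarith [pow_le_one₀ h0 hu (n := 2), pow_le_one₀ h0 hu (n := 3),
    pow_le_one₀ h0 hu (n := 4), mul_nonneg hb h0]

theorem ssp_rk_tase1_stable (α : ℝ) (hα : 1 / 2 ≤ α)
    (s : ℕ) (hs1 : 1 ≤ s) (hs4 : s ≤ 4)
    (z : ℂ) (hz : z.re ≤ 0) :
    ‖∑ k ∈ Finset.range (s + 1),
      (z / (1 - (α : ℂ) * z)) ^ k / (Nat.factorial k : ℂ)‖ ≤ 1 := by
  have hαpos : (0:ℝ) < α := by linarith
  have hd : (1 - (α : ℂ) * z) ≠ 0 := by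
    intro h
    have h' := congrArg Complex.re h
    simp [Complex.sub_re, Complex.mul_re] at h'
    nlinarith
  set w : ℂ := z / (1 - (α : ℂ) * z) with hw
  have hu : ‖1 + w‖ ≤ 1 := by
    have h1 : 1 + w = (1 - (α : ℂ) * z + z) / (1 - (α : ℂ) * z) := by
      field_simp [hw]
      rw [hw, add_mul, div_mul_cancel₀ _ hd]; ring
    rw [h1, norm_div, div_le_one (norm_pos_iff.mpr hd)]
    rw [Complex.norm_def, Complex.norm_def]
    refine Real.sqrt_le_sqrt ?_
    simp only [Complex.normSq_apply, Complex.add_re, Complex.add_im,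
      Complex.sub_re, Complex.sub_im, Complex.mul_re, Complex.mul_im,
      Complex.one_re, Complex.one_im, Complex.ofReal_re, Complex.ofReal_im]
    nlinarith [mul_nonneg (by linarith : (0:ℝ) ≤ 2*α - 1)
      (add_nonneg (sq_nonneg z.re) (sq_nonneg z.im))]
  interval_cases s <;>
    simp only [Finset.sum_range_succ, Finset.sum_range_zero, Nat.factorial,
      Nat.cast_ofNat, Nat.cast_one, pow_zero, pow_one, zero_add] <;>
    norm_num
  · calc ‖1 + w‖
        = ‖((0:ℝ):ℂ) + ((1:ℝ):ℂ) * (1+w) + ((0:ℝ):ℂ) * (1+w)^2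
          + ((0:ℝ):ℂ) * (1+w)^3 + ((0:ℝ):ℂ) * (1+w)^4‖ := by push_cast; ring_nf
      _ ≤ 1 := coef_bound _ hu _ _ _ _ _ le_rfl zero_le_one le_rfl le_rfl le_rfl (by norm_num)
  · calc ‖1 + w + w^2 / 2‖
        = ‖((1/2:ℝ):ℂ) + ((0:ℝ):ℂ) * (1+w) + ((1/2:ℝ):ℂ) * (1+w)^2
          + ((0:ℝ):ℂ) * (1+w)^3 + ((0:ℝ):ℂ) * (1+w)^4‖ := by push_cast; ring_nf
      _ ≤ 1 := coef_bound _ hu _ _ _ _ _ (by norm_num) le_rfl (by norm_num) le_rfl le_rfl (by norm_num)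
  · calc ‖1 + w + w^2 / 2 + w^3 / 6‖
        = ‖((1/3:ℝ):ℂ) + ((1/2:ℝ):ℂ) * (1+w) + ((0:ℝ):ℂ) * (1+w)^2
          + ((1/6:ℝ):ℂ) * (1+w)^3 + ((0:ℝ):ℂ) * (1+w)^4‖ := by push_cast; ring_nf
      _ ≤ 1 := coef_bound _ hu _ _ _ _ _ (by norm_num) (by norm_num) le_rfl (by norm_num) le_rfl (by norm_num)
  · calc ‖1 + w + w^2 / 2 + w^3 / 6 + w^4 / 24‖
        = ‖((3/8:ℝ):ℂ) + ((1/3:ℝ):ℂ) * (1+w) + ((1/4:ℝ):ℂ) * (1+w)^2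
          + ((0:ℝ):ℂ) * (1+w)^3 + ((1/24:ℝ):ℂ) * (1+w)^4‖ := by push_cast; ring_nf
      _ ≤ 1 := coef_bound _ hu _ _ _ _ _ (by norm_num) (by norm_num) (by norm_num) le_rfl (by norm_num) (by norm_num)
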